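/- Let α_1, β_1, α_2, β_2 > 0, let g(α_1,β_1,α_2,β_2) = ∫_0^1 f(x;α_1,β_1) I_x(α_2,β_2) dx and h(α_1,β_1,α_2,β_2) = B(α_1+α_2, β_1+β_2)/(B(α_1,β_1) B(α_2,β_2)). Then g(α_1+1, β_1, α_2, β_2) = g(α_1,β_1,α_2,β_2) + h(α_1,β_1,α_2,β_2)/α_1. -/

import Mathlib

open MeasureTheory Real Set

/-- The Beta function `B(a,b) = ∫₀¹ t^(a-1) (1-t)^(b-1) dt`. -/
noncomputable def betaFn (a b : ℝ) : ℝ :=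
  ∫ t in (0:ℝ)..1, t ^ (a - 1) * (1 - t) ^ (b - 1)

/-- The Beta(a,b) probability density on `[0,1]`. -/
noncomputable def betaPdf (a b : ℝ) (x : ℝ) : ℝ :=
  x ^ (a - 1) * (1 - x) ^ (b - 1) / betaFn a b

/-- The cumulative distribution function of Beta(a,b). -/
noncomputable def betaCdf (a b : ℝ) (x : ℝ) : ℝ :=
  (∫ t in (0:ℝ)..x, t ^ (a - 1) * (1 - t) ^ (b - 1)) / betaFn a b

/-- `g(α₁,β₁,α₂,β₂)`: the probability that an independent Beta(α₁,β₁) sample exceeds an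
independent Beta(α₂,β₂) sample. -/
noncomputable def probG (a₁ b₁ a₂ b₂ : ℝ) : ℝ :=
  ∫ x in (0:ℝ)..1, betaPdf a₁ b₁ x * betaCdf a₂ b₂ x

/-- `h(α₁,β₁,α₂,β₂) = B(α₁+α₂,β₁+β₂)/(B(α₁,β₁) B(α₂,β₂))`. -/
noncomputable def probH (a₁ b₁ a₂ b₂ : ℝ) : ℝ :=
  betaFn (a₁ + a₂) (b₁ + b₂) / (betaFn a₁ b₁ * betaFn a₂ b₂)

/- ### Auxiliary lemmas -/

lemma ii_left {p q : ℝ} (hp : -1 < p) :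
    IntervalIntegrable (fun x : ℝ => x ^ p * (1 - x) ^ q) volume 0 (1/2) := by
  apply IntervalIntegrable.mul_continuousOn
  · exact intervalIntegral.intervalIntegrable_rpow' hp
  · apply continuousOn_of_forall_continuousAt
    intro x hx
    rw [uIcc_of_le (by norm_num : (0:ℝ) ≤ 1/2)] at hx
    exact ContinuousAt.rpow_const (by fun_prop) (Or.inl (by intro h; simp at hx; linarith [hx.2]))

lemma ii_beta {p q : ℝ} (hp : -1 < p) (hq : -1 < q) :
    IntervalIntegrable (fun x : ℝ => x ^ p * (1 - x) ^ q) volume 0 1 := by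
  refine (ii_left hp).trans ?_
  rw [IntervalIntegrable.iff_comp_neg]
  convert ((ii_left hq (p := q) (q := p)).comp_add_right 1).symm using 1
  · ext1 x
    show (-x) ^ p * (1 - -x) ^ q = (x + 1) ^ q * (1 - (x + 1)) ^ p
    rw [mul_comm]
    congr 2 <;> ring
  · norm_num
  · norm_num

lemma cont_rpow {p : ℝ} (hp : 0 < p) : Continuous (fun x : ℝ => x ^ p) := by
  rw [continuous_iff_continuousAt]
  exact fun x => Real.continuousAt_rpow_const x p (Or.inr hp.le)

lemma cont_u {p q : ℝ} (hp : 0 < p) (hq : 0 < q) :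
    Continuous (fun x : ℝ => x ^ p * (1 - x) ^ q) :=
  (cont_rpow hp).mul ((cont_rpow hq).comp (continuous_const.sub continuous_id))

lemma w_contAt {p q x : ℝ} (hx : x ∈ Ioo (0:ℝ) 1) :
    ContinuousAt (fun t : ℝ => t ^ p * (1 - t) ^ q) x := by
  have h2 : (1:ℝ) - x ≠ 0 := (by linarith [hx.2] : (0:ℝ) < 1 - x).ne'
  exact (Real.continuousAt_rpow_const x p (Or.inl hx.1.ne')).mul
    (ContinuousAt.rpow_const (by fun_prop) (Or.inl h2))

lemma betaFn_pos {a b : ℝ} (ha : 0 < a) (hb : 0 < b) : 0 < betaFn a b := by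
  rw [betaFn]
  apply intervalIntegral.intervalIntegral_pos_of_pos_on
    (ii_beta (by linarith) (by linarith))
  · intro x hx
    have h1 : 0 < x := hx.1
    have h2 : 0 < 1 - x := by linarith [hx.2]
    positivity
  · norm_num

lemma integral_Ioo_congr {f g : ℝ → ℝ} (h : ∀ x ∈ Ioo (0:ℝ) 1, f x = g x) :
    ∫ x in (0:ℝ)..1, f x = ∫ x in (0:ℝ)..1, g x := by
  apply intervalIntegral.integral_congr_ae
  have h1 : ∀ᵐ x : ℝ ∂volume, x ≠ 1 := by
    rw [ae_iff]
    simp only [ne_eq, not_not]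
    convert Real.volume_singleton (a := 1) using 2
    ext; simp
  filter_upwards [h1] with x hx hmem
  rw [uIoc_of_le (by norm_num : (0:ℝ) ≤ 1)] at hmem
  exact h x ⟨hmem.1, lt_of_le_of_ne hmem.2 hx⟩

lemma hasDerivAt_u {p q : ℝ} {x : ℝ} (hx : x ∈ Ioo (0:ℝ) 1) :
    HasDerivAt (fun x : ℝ => x ^ p * (1 - x) ^ q)
      (p * (x ^ (p-1) * (1 - x) ^ q) - q * (x ^ p * (1 - x) ^ (q-1))) x := by
  have h1 : HasDerivAt (fun x : ℝ => x ^ p) (p * x ^ (p-1)) x :=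
    Real.hasDerivAt_rpow_const (Or.inl hx.1.ne')
  have h2 : HasDerivAt (fun x : ℝ => (1 - x) ^ q) ((-1) * q * (1 - x) ^ (q-1)) x :=
    (HasDerivAt.const_sub 1 (hasDerivAt_id x)).rpow_const
      (Or.inl (show (1:ℝ) - x ≠ 0 from (by linarith [hx.2] : (0:ℝ) < 1 - x).ne'))
  convert h1.mul h2 using 1
  · rfl
  · rfl
  · rfl
  ring

lemma u_boundary {p q : ℝ} (hp : 0 < p) (hq : 0 < q) :
    (1:ℝ) ^ p * (1 - 1) ^ q = 0 ∧ (0:ℝ) ^ p * (1 - 0) ^ q = 0 := by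
  constructor
  · rw [sub_self, Real.zero_rpow hq.ne']; ring
  · rw [Real.zero_rpow hp.ne']; ring

/-- Beta function recurrence: `(a+b) B(a+1, b) = a B(a, b)`. -/
lemma betaFn_rec {a b : ℝ} (ha : 0 < a) (hb : 0 < b) :
    (a + b) * betaFn (a+1) b = a * betaFn a b := by
  have hd : ∀ x ∈ Ioo (0:ℝ) 1,
      HasDerivAt (fun x : ℝ => x ^ a * (1 - x) ^ b)
        (a * (x ^ (a-1) * (1 - x) ^ b) - b * (x ^ a * (1 - x) ^ (b-1))) x :=
    fun x hx => hasDerivAt_u hx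
  have hint : IntervalIntegrable
      (fun x : ℝ => a * (x ^ (a-1) * (1 - x) ^ b) - b * (x ^ a * (1 - x) ^ (b-1)))
      volume 0 1 :=
    ((ii_beta (by linarith) (by linarith)).const_mul a).sub
      ((ii_beta (by linarith) (by linarith)).const_mul b)
  have key : (∫ x in (0:ℝ)..1,
      (a * (x ^ (a-1) * (1 - x) ^ b) - b * (x ^ a * (1 - x) ^ (b-1)))) = 0 := by
    rw [intervalIntegral.integral_eq_sub_of_hasDerivAt_of_le (by norm_num)
      (cont_u ha hb).continuousOn hd hint]
    rw [(u_boundary ha hb).1, (u_boundary ha hb).2, sub_zero]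
  -- split the integral
  have i1 : IntervalIntegrable (fun x : ℝ => x ^ (a-1) * (1 - x) ^ b) volume 0 1 :=
    ii_beta (by linarith) (by linarith)
  have i2 : IntervalIntegrable (fun x : ℝ => x ^ a * (1 - x) ^ (b-1)) volume 0 1 :=
    ii_beta (by linarith) (by linarith)
  rw [intervalIntegral.integral_sub (i1.const_mul a) (i2.const_mul b),
    intervalIntegral.integral_const_mul, intervalIntegral.integral_const_mul,
    sub_eq_zero] at key
  have e1 : (∫ x in (0:ℝ)..1, x ^ (a-1) * (1 - x) ^ b)
      = betaFn a b - betaFn (a+1) b := by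
    rw [betaFn, betaFn, ← intervalIntegral.integral_sub
      (ii_beta (by linarith) (by linarith)) (ii_beta (by linarith) (by linarith))]
    apply integral_Ioo_congr
    intro x hx
    have h1 : (0:ℝ) < x := hx.1
    have h2 : (0:ℝ) < 1 - x := by linarith [hx.2]
    have e2 : (1 - x) ^ b = (1 - x) ^ (b-1) * (1 - x) := by
      rw [← Real.rpow_add_one h2.ne' (b-1), sub_add_cancel]
    have e3 : x ^ (a+1-1) = x ^ (a-1) * x := by
      rw [← Real.rpow_add_one h1.ne' (a-1), sub_add_cancel, add_sub_cancel_right]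
    rw [e2, e3]
    ring
  have e4 : (∫ x in (0:ℝ)..1, x ^ a * (1 - x) ^ (b-1)) = betaFn (a+1) b := by
    rw [betaFn]
    norm_num
  rw [e1, e4] at key
  linarith [key]

/-- Recurrence: incrementing α₁ by one. -/
theorem probG_alpha1_succ (a₁ b₁ a₂ b₂ : ℝ)
    (hα₁ : 0 < a₁) (hβ₁ : 0 < b₁) (hα₂ : 0 < a₂) (hβ₂ : 0 < b₂) :
    probG (a₁ + 1) b₁ a₂ b₂ = probG a₁ b₁ a₂ b₂ + probH a₁ b₁ a₂ b₂ / a₁ := by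
  have huIcc : uIcc (0:ℝ) 1 = Icc (0:ℝ) 1 := uIcc_of_le (by norm_num)
  set v : ℝ → ℝ := fun x => ∫ t in (0:ℝ)..x, t ^ (a₂ - 1) * (1 - t) ^ (b₂ - 1) with hv
  have hw₂ : IntervalIntegrable (fun t : ℝ => t ^ (a₂-1) * (1 - t) ^ (b₂-1)) volume 0 1 :=
    ii_beta (by linarith) (by linarith)
  have hc₁ : 0 < betaFn a₁ b₁ := betaFn_pos hα₁ hβ₁
  have hc₂ : 0 < betaFn a₂ b₂ := betaFn_pos hα₂ hβ₂
  have hA : 0 < betaFn (a₁+1) b₁ := betaFn_pos (by linarith) hβ₁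
  have hv_cont : ContinuousOn v (Icc (0:ℝ) 1) := by
    rw [← huIcc]
    exact intervalIntegral.continuousOn_primitive_interval' hw₂ left_mem_uIcc
  have hv_deriv : ∀ x ∈ Ioo (0:ℝ) 1,
      HasDerivAt v (x ^ (a₂-1) * (1 - x) ^ (b₂-1)) x := by
    intro x hx
    apply intervalIntegral.integral_hasDerivAt_right
      (hw₂.mono_set ?_)
      (ContinuousAt.stronglyMeasurableAtFilter isOpen_Ioo
        (fun y hy => w_contAt hy) x hx)
      (w_contAt hx)
    rw [huIcc, uIcc_of_le hx.1.le]
    exact Icc_subset_Icc le_rfl hx.2.le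
  -- integration by parts / FTC
  have iu' : IntervalIntegrable
      (fun x : ℝ => a₁ * (x ^ (a₁-1) * (1 - x) ^ b₁) - b₁ * (x ^ a₁ * (1 - x) ^ (b₁-1)))
      volume 0 1 :=
    ((ii_beta (by linarith) (by linarith)).const_mul a₁).sub
      ((ii_beta (by linarith) (by linarith)).const_mul b₁)
  have iu'v : IntervalIntegrable
      (fun x : ℝ => (a₁ * (x ^ (a₁-1) * (1 - x) ^ b₁) - b₁ * (x ^ a₁ * (1 - x) ^ (b₁-1))) * v x)
      volume 0 1 := by
    apply iu'.mul_continuousOn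
    rwa [huIcc]
  have iuw : IntervalIntegrable
      (fun x : ℝ => (x ^ a₁ * (1 - x) ^ b₁) * (x ^ (a₂-1) * (1 - x) ^ (b₂-1))) volume 0 1 := by
    apply hw₂.continuousOn_mul (cont_u hα₁ hβ₁).continuousOn
  have key : (∫ x in (0:ℝ)..1,
      ((a₁ * (x ^ (a₁-1) * (1 - x) ^ b₁) - b₁ * (x ^ a₁ * (1 - x) ^ (b₁-1))) * v x
        + (x ^ a₁ * (1 - x) ^ b₁) * (x ^ (a₂-1) * (1 - x) ^ (b₂-1)))) = 0 := by
    rw [intervalIntegral.integral_eq_sub_of_hasDerivAt_of_le (by norm_num)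
      (((cont_u hα₁ hβ₁).continuousOn).mul hv_cont)
      (fun x hx => (hasDerivAt_u hx).mul (hv_deriv x hx))
      (iu'v.add iuw)]
    simp only [Pi.mul_apply]
    rw [(u_boundary hα₁ hβ₁).1, (u_boundary hα₁ hβ₁).2]
    ring
  rw [intervalIntegral.integral_add iu'v iuw] at key
  have huw : (∫ x in (0:ℝ)..1,
      (x ^ a₁ * (1 - x) ^ b₁) * (x ^ (a₂-1) * (1 - x) ^ (b₂-1)))
      = betaFn (a₁+a₂) (b₁+b₂) := by
    rw [betaFn]
    apply integral_Ioo_congr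
    intro x hx
    have h1 : (0:ℝ) < x := hx.1
    have h2 : (0:ℝ) < 1 - x := by linarith [hx.2]
    rw [show a₁+a₂-1 = a₁+(a₂-1) from by ring, Real.rpow_add h1,
      show b₁+b₂-1 = b₁+(b₂-1) from by ring, Real.rpow_add h2]
    ring
  -- integrability of the two probG integrands
  have ig : ∀ a b : ℝ, 0 < a → 0 < b → IntervalIntegrable
      (fun x => betaPdf a b x * betaCdf a₂ b₂ x) volume 0 1 := by
    intro a b ha hb
    simp only [betaPdf, betaCdf]
    apply ((ii_beta (by linarith : (-1:ℝ) < a - 1) (by linarith)).div_const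
      (betaFn a b)).mul_continuousOn
    rw [huIcc]
    exact hv_cont.div_const _
  have hdiff : probG (a₁+1) b₁ a₂ b₂ - probG a₁ b₁ a₂ b₂
      = ∫ x in (0:ℝ)..1, (betaPdf (a₁+1) b₁ x * betaCdf a₂ b₂ x
          - betaPdf a₁ b₁ x * betaCdf a₂ b₂ x) := by
    rw [probG, probG, ← intervalIntegral.integral_sub (ig _ _ (by linarith) hβ₁) (ig _ _ hα₁ hβ₁)]
  have hAval : betaFn (a₁+1) b₁ = a₁ * betaFn a₁ b₁ / (a₁+b₁) := by
    have := betaFn_rec hα₁ hβ₁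
    field_simp
    linarith [this]
  have hpoint : ∀ x ∈ Ioo (0:ℝ) 1,
      betaPdf (a₁+1) b₁ x * betaCdf a₂ b₂ x - betaPdf a₁ b₁ x * betaCdf a₂ b₂ x
      = (1/(a₁ * betaFn a₁ b₁ * betaFn a₂ b₂))
        * (-((a₁ * (x ^ (a₁-1) * (1 - x) ^ b₁) - b₁ * (x ^ a₁ * (1 - x) ^ (b₁-1))) * v x)) := by
    intro x hx
    have h1 : (0:ℝ) < x := hx.1
    have h2 : (0:ℝ) < 1 - x := by linarith [hx.2]
    simp only [betaPdf, betaCdf]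
    rw [show a₁+1-1 = a₁ from by ring, hAval]
    have e1 : x ^ a₁ = x ^ (a₁-1) * x := by
      rw [← Real.rpow_add_one h1.ne' (a₁-1), sub_add_cancel]
    have e2 : (1 - x) ^ b₁ = (1 - x) ^ (b₁-1) * (1 - x) := by
      rw [← Real.rpow_add_one h2.ne' (b₁-1), sub_add_cancel]
    rw [e1, e2]
    have hab : a₁ + b₁ ≠ 0 := by positivity
    field_simp
    ring
  have hint2 : probG (a₁+1) b₁ a₂ b₂ - probG a₁ b₁ a₂ b₂
      = (1/(a₁ * betaFn a₁ b₁ * betaFn a₂ b₂)) * betaFn (a₁+a₂) (b₁+b₂) := by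
    rw [hdiff, integral_Ioo_congr hpoint, intervalIntegral.integral_const_mul,
      intervalIntegral.integral_neg]
    congr 1
    linarith [key, huw]
  have hH : probH a₁ b₁ a₂ b₂ / a₁
      = (1/(a₁ * betaFn a₁ b₁ * betaFn a₂ b₂)) * betaFn (a₁+a₂) (b₁+b₂) := by
    rw [probH]
    rw [div_div, div_mul_eq_mul_div, one_mul, mul_comm (betaFn a₁ b₁) (betaFn a₂ b₂)]
    ring_nf
  linarith [hint2, hH]
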